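/- Let X and Y be Banach spaces, F : X ⇝ Y a set-valued map with nonempty values and closed graph, p ∈ X, (x,y) ∈ gr F, and let G ⊆ Y be a compact set with G ⊆ ∂^L F(x,y)/∂p. Then there exist δ* > 0 and a function r : [0, δ*] → [0, ∞) with r(δ) → 0 as δ → 0+ such that y + δG ⊆ F(x+δp) + δ r(δ) B for every δ ∈ [0, δ*], where B = {v ∈ Y : ‖v‖ ≤ 1} is the closed unit ball of Y. -/

import Mathlib

open Filter Metric Set Topology Pointwise

/-- Upper contingent cone `T^U_K(x)`. -/
noncomputable def upperContingentCone {X : Type*} [NormedAddCommGroup X] [NormedSpace ℝ X]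
    (K : Set X) (x : X) : Set X :=
  {u : X | liminf (fun δ : ℝ => (1 / δ) * infDist (x + δ • u) K) (𝓝[>] 0) = 0}

/-- Lower contingent cone `T^L_K(x)`. -/
noncomputable def lowerContingentCone {X : Type*} [NormedAddCommGroup X] [NormedSpace ℝ X]
    (K : Set X) (x : X) : Set X :=
  {u : X | Tendsto (fun δ : ℝ => (1 / δ) * infDist (x + δ • u) K) (𝓝[>] 0) (𝓝 0)}

/-- Graph of a set-valued map. -/
def svGraph {X Y : Type*} (F : X → Set Y) : Set (X × Y) := {q : X × Y | q.2 ∈ F q.1}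

/-- Upper derivative set `∂^U F(x,y)/∂p`. -/
noncomputable def upperDerivSet {X Y : Type*} [NormedAddCommGroup X] [NormedSpace ℝ X]
    [NormedAddCommGroup Y] [NormedSpace ℝ Y] (F : X → Set Y) (x : X) (y : Y) (p : X) : Set Y :=
  {u : Y | liminf (fun δ : ℝ => (1 / δ) * infDist (y + δ • u) (F (x + δ • p))) (𝓝[>] 0) = 0}

/-- Lower derivative set `∂^L F(x,y)/∂p`. -/
noncomputable def lowerDerivSet {X Y : Type*} [NormedAddCommGroup X] [NormedSpace ℝ X]
    [NormedAddCommGroup Y] [NormedSpace ℝ Y] (F : X → Set Y) (x : X) (y : Y) (p : X) : Set Y :=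
  {u : Y | Tendsto (fun δ : ℝ => (1 / δ) * infDist (y + δ • u) (F (x + δ • p))) (𝓝[>] 0) (𝓝 0)}

/-- Local Lipschitz continuity of a set-valued map (w.r.t. Hausdorff distance). -/
def LocallyLipschitzSV {X Y : Type*} [NormedAddCommGroup X] [NormedAddCommGroup Y]
    (F : X → Set Y) : Prop :=
  ∀ x : X, ∃ L : ℝ, 0 ≤ L ∧ ∃ r : ℝ, 0 < r ∧
    ∀ y ∈ ball x r, ∀ z ∈ ball x r, hausdorffDist (F y) (F z) ≤ L * dist y z

/-- Hausdorff deviation `h*(E, D) = sup_{e ∈ E} d(e, D)`. -/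
noncomputable def hausdorffDev {Y : Type*} [NormedAddCommGroup Y] (E D : Set Y) : ℝ :=
  sSup ((fun e => infDist e D) '' E)

theorem exists_remainder_of_compact_subset_lowerDerivSet
    {X Y : Type*} [NormedAddCommGroup X] [NormedSpace ℝ X] [CompleteSpace X]
    [NormedAddCommGroup Y] [NormedSpace ℝ Y] [CompleteSpace Y]
    (F : X → Set Y) (hne : ∀ x : X, (F x).Nonempty) (hF : IsClosed (svGraph F))
    (p : X) (x : X) (y : Y) (hxy : (x, y) ∈ svGraph F)
    (G : Set Y) (hG : IsCompact G) (hGsub : G ⊆ lowerDerivSet F x y p) :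
    ∃ δs : ℝ, 0 < δs ∧ ∃ r : ℝ → ℝ,
      (∀ δ ∈ Icc (0 : ℝ) δs, 0 ≤ r δ) ∧
      Tendsto r (𝓝[>] 0) (𝓝 0) ∧
      ∀ δ ∈ Icc (0 : ℝ) δs,
        (fun g => y + δ • g) '' G ⊆ F (x + δ • p) + (δ * r δ) • closedBall (0 : Y) 1 := by
  classical
  set S : ℝ → ℝ := fun δ => sSup ((fun g => infDist (y + δ • g) (F (x + δ • p))) '' G) with hSdef
  have hS_nonneg : ∀ δ, 0 ≤ S δ := by
    intro δ
    apply Real.sSup_nonneg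
    rintro _ ⟨g, -, rfl⟩
    exact infDist_nonneg
  have hS_bdd : ∀ δ : ℝ, BddAbove ((fun g => infDist (y + δ • g) (F (x + δ • p))) '' G) := by
    intro δ
    refine (hG.image ?_).bddAbove
    exact (continuous_infDist_pt _).comp (continuous_const.add (continuous_const.smul continuous_id))
  set r : ℝ → ℝ := fun δ => (1/δ) * S δ + δ with hrdef
  -- key uniform estimate
  have key : ∀ ε : ℝ, 0 < ε → ∀ᶠ δ in 𝓝[>] (0:ℝ), S δ ≤ ε * δ := by
    intro ε hε
    have hcov : G ⊆ ⋃ g : G, ball (g : Y) (ε/3) := by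
      intro h hh
      exact mem_iUnion.2 ⟨⟨h, hh⟩, mem_ball_self (by linarith)⟩
    obtain ⟨t, ht⟩ := hG.elim_finite_subcover (fun g : G => ball (g : Y) (ε/3))
      (fun g => isOpen_ball) hcov
    have hall : ∀ᶠ δ in 𝓝[>] (0:ℝ),
        ∀ g ∈ t, (1/δ) * infDist (y + δ • (g : Y)) (F (x + δ • p)) < ε/3 := by
      rw [Filter.eventually_all_finset]
      intro g hg
      exact (hGsub g.2).eventually (eventually_lt_nhds (by linarith))
    filter_upwards [hall, self_mem_nhdsWithin] with δ hδall (hδ : (0:ℝ) < δ)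
    apply Real.sSup_le
    · rintro _ ⟨h, hh, rfl⟩
      obtain ⟨i, hit⟩ := mem_iUnion₂.1 (ht hh)
      obtain ⟨hi, hball⟩ := hit
      have h1 : infDist (y + δ • h) (F (x + δ • p))
          ≤ infDist (y + δ • (i : Y)) (F (x + δ • p)) + dist (y + δ • h) (y + δ • (i : Y)) :=
        infDist_le_infDist_add_dist
      have h2 : dist (y + δ • h) (y + δ • (i : Y)) = δ * dist h (i : Y) := by
        rw [dist_add_left, dist_smul₀, Real.norm_eq_abs, abs_of_pos hδ]
      have h3 : infDist (y + δ • (i : Y)) (F (x + δ • p)) < (ε/3) * δ := by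
        have := hδall i hi
        have h4 : (1/δ) * infDist (y + δ • (i : Y)) (F (x + δ • p)) * δ < (ε/3) * δ :=
          mul_lt_mul_of_pos_right this hδ
        field_simp at h4
        linarith [h4]
      have h5 : dist h (i : Y) < ε/3 := mem_ball.1 hball
      nlinarith [dist_nonneg (x := h) (y := (i : Y))]
    · positivity
  refine ⟨1, one_pos, r, ?_, ?_, ?_⟩
  · intro δ hδ
    have h1 := hS_nonneg δ
    have h2 : 0 ≤ 1/δ := by
      rcases eq_or_lt_of_le hδ.1 with h | h
      · simp [← h]
      · positivity
    have : 0 ≤ (1/δ) * S δ := mul_nonneg h2 h1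
    simp only [hrdef]
    linarith [hδ.1]
  · rw [NormedAddCommGroup.tendsto_nhds_zero]
    intro ε hε
    have h1 := key (ε/3) (by linarith)
    have h2 : Ioo (0:ℝ) (ε/3) ∈ 𝓝[>] (0:ℝ) := Ioo_mem_nhdsGT_of_mem ⟨le_refl 0, by linarith⟩
    filter_upwards [h1, h2] with δ hδ1 hδ2
    have hδ : 0 < δ := hδ2.1
    have h3 : (1/δ) * S δ ≤ ε/3 := by
      have := mul_le_mul_of_nonneg_left hδ1 (le_of_lt (show (0:ℝ) < 1/δ by positivity))
      calc (1/δ) * S δ ≤ (1/δ) * (ε/3 * δ) := this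
        _ = ε/3 := by field_simp
    have h4 : 0 ≤ (1/δ) * S δ := mul_nonneg (by positivity) (hS_nonneg δ)
    have : r δ = (1/δ) * S δ + δ := rfl
    rw [Real.norm_eq_abs, abs_of_nonneg (by rw [this]; linarith)]
    rw [this]
    linarith [hδ2.2]
  · intro δ hδ
    rcases eq_or_lt_of_le hδ.1 with h0 | h0
    · rintro z ⟨g, hg, rfl⟩
      refine ⟨y, ?_, 0, ?_, ?_⟩
      · have hxy' : y ∈ F x := hxy
        simpa [← h0] using hxy'
      · exact ⟨0, mem_closedBall_self zero_le_one, smul_zero _⟩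
      · simp [← h0]
    · rintro z ⟨g, hg, rfl⟩
      have h1 : infDist (y + δ • g) (F (x + δ • p)) ≤ S δ := le_csSup (hS_bdd δ) ⟨g, hg, rfl⟩
      have hr_pos : 0 < r δ := by
        have : 0 ≤ (1/δ) * S δ := mul_nonneg (by positivity) (hS_nonneg δ)
        simp only [hrdef]; linarith
      have hc : 0 < δ * r δ := mul_pos h0 hr_pos
      have h2 : δ * r δ = S δ + δ * δ := by
        simp only [hrdef]
        field_simp
      have h3 : infDist (y + δ • g) (F (x + δ • p)) < δ * r δ := by
        rw [h2]; nlinarith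
      obtain ⟨w, hw, hdist⟩ := (infDist_lt_iff (hne _)).1 h3
      have hb : (y + δ • g) - w ∈ (δ * r δ) • closedBall (0 : Y) 1 := by
        refine ⟨(δ * r δ)⁻¹ • ((y + δ • g) - w), ?_, ?_⟩
        · rw [mem_closedBall_zero_iff, norm_smul, Real.norm_eq_abs, abs_of_pos (by positivity),
            inv_mul_le_iff₀ hc, mul_one]
          rw [dist_eq_norm] at hdist
          exact le_of_lt hdist
        · exact smul_inv_smul₀ (ne_of_gt hc) _
      have heq : y + δ • g = w + ((y + δ • g) - w) := by abel
      show y + δ • g ∈ _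
      rw [heq]
      exact add_mem_add hw hb
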